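/- arXiv:1606.02026 — 4 statements merged into one kernel-verified Lean document; each statement's English description precedes it below -/
import Mathlib

section
/- Let θ : ℝ → ℝ be differentiable at t₀ and let n(t) = (cos θ(t), sin θ(t)) be a point moving on the unit circle centred at the origin of ℝ². Let p : ℝ → ℝ² be differentiable at t₀, set x(t) = p(t) − n(t), and assume that for all t the tangency condition x(t) = ‖x(t)‖ • (−sin θ(t), cos θ(t)) holds with x(t) ≠ 0. Then the length function L(t) = θ(t) + ‖x(t)‖ of the CS-curve (circular arc of angle θ(t) followed by the straight segment from n(t) to p(t)) is differentiable at t₀ and L′(t₀) = ⟪p′(t₀), x(t₀)/‖x(t₀)‖⟫, i.e. the first variation of length is the scalar product of the direction of variation of the endpoint with the outward pointing unit vector along the segment. -/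
open Real
open scoped InnerProductSpace

/-- The point of `EuclideanSpace ℝ (Fin 2)` with coordinates `a`, `b`. -/
def pt (a b : ℝ) : EuclideanSpace ℝ (Fin 2) := WithLp.toLp 2 ![a, b]

/-- **First variation of length of a CS-curve** (Proposition 1).
`θ t` is the arc angle, `n t = (cos θ t, sin θ t)` the junction point on the unit circle,
`p t` the moving endpoint, `x t = p t - n t` the straight segment, tangent to the circle.
Then `L t = θ t + ‖x t‖` is differentiable at `t₀` with derivative
`⟪p'(t₀), x(t₀)/‖x(t₀)‖⟫`. -/
theorem first_variation_CS_curve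
    (θ : ℝ → ℝ) (p : ℝ → EuclideanSpace ℝ (Fin 2)) (t₀ : ℝ)
    (v : EuclideanSpace ℝ (Fin 2))
    (hθ : DifferentiableAt ℝ θ t₀) (hp : HasDerivAt p v t₀)
    (htan : ∀ t : ℝ,
      p t - pt (Real.cos (θ t)) (Real.sin (θ t)) =
        ‖p t - pt (Real.cos (θ t)) (Real.sin (θ t))‖ •
          pt (-Real.sin (θ t)) (Real.cos (θ t)))
    (hne : ∀ t : ℝ, p t - pt (Real.cos (θ t)) (Real.sin (θ t)) ≠ 0) :
    HasDerivAt
      (fun t => θ t + ‖p t - pt (Real.cos (θ t)) (Real.sin (θ t))‖)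
      ⟪v, ‖p t₀ - pt (Real.cos (θ t₀)) (Real.sin (θ t₀))‖⁻¹ •
          (p t₀ - pt (Real.cos (θ t₀)) (Real.sin (θ t₀)))⟫_ℝ
      t₀ := by
  have hcomp : ∀ t, (p t 0 - Real.cos (θ t) = -(‖p t - pt (Real.cos (θ t)) (Real.sin (θ t))‖ * Real.sin (θ t)))
      ∧ (p t 1 - Real.sin (θ t) = ‖p t - pt (Real.cos (θ t)) (Real.sin (θ t))‖ * Real.cos (θ t)) := by
    intro t
    have h0 := congrArg (fun w : EuclideanSpace ℝ (Fin 2) => w 0) (htan t)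
    have h1 := congrArg (fun w : EuclideanSpace ℝ (Fin 2) => w 1) (htan t)
    simp [pt, PiLp.sub_apply, PiLp.smul_apply, smul_eq_mul] at h0 h1
    exact ⟨h0, h1⟩
  have hr : ∀ t, ‖p t - pt (Real.cos (θ t)) (Real.sin (θ t))‖ =
      (p t 0 - Real.cos (θ t)) * (-Real.sin (θ t)) + (p t 1 - Real.sin (θ t)) * Real.cos (θ t) := by
    intro t
    rw [(hcomp t).1, (hcomp t).2]
    have hs := Real.sin_sq_add_cos_sq (θ t)
    linear_combination (-‖p t - pt (Real.cos (θ t)) (Real.sin (θ t))‖) * hs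
  have hfun : (fun t => θ t + ‖p t - pt (Real.cos (θ t)) (Real.sin (θ t))‖) =
      fun t => θ t + ((p t 0 - Real.cos (θ t)) * (-Real.sin (θ t)) + (p t 1 - Real.sin (θ t)) * Real.cos (θ t)) := by
    funext t; rw [hr t]
  rw [hfun]
  set r := ‖p t₀ - pt (Real.cos (θ t₀)) (Real.sin (θ t₀))‖ with hrdef
  have hrne : r ≠ 0 := norm_ne_zero_iff.mpr (hne t₀)
  have h0 := (hcomp t₀).1
  have h1 := (hcomp t₀).2
  rw [← hrdef] at h0 h1
  have hinner : ⟪v, r⁻¹ • (p t₀ - pt (Real.cos (θ t₀)) (Real.sin (θ t₀)))⟫_ℝ =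
      v 0 * (-Real.sin (θ t₀)) + v 1 * Real.cos (θ t₀) := by
    have e0 : (r⁻¹ • (p t₀ - pt (Real.cos (θ t₀)) (Real.sin (θ t₀)))) 0 = -Real.sin (θ t₀) := by
      simp only [PiLp.smul_apply, smul_eq_mul, PiLp.sub_apply]
      have : p t₀ 0 - pt (Real.cos (θ t₀)) (Real.sin (θ t₀)) 0 = r * (-Real.sin (θ t₀)) := by
        simpa [pt, mul_comm] using h0
      rw [this, inv_mul_cancel_left₀ hrne]
    have e1 : (r⁻¹ • (p t₀ - pt (Real.cos (θ t₀)) (Real.sin (θ t₀)))) 1 = Real.cos (θ t₀) := by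
      simp only [PiLp.smul_apply, smul_eq_mul, PiLp.sub_apply]
      have : p t₀ 1 - pt (Real.cos (θ t₀)) (Real.sin (θ t₀)) 1 = r * Real.cos (θ t₀) := by
        simpa [pt] using h1
      rw [this, inv_mul_cancel_left₀ hrne]
    rw [PiLp.inner_apply, Fin.sum_univ_two, e0, e1]
    simp [mul_comm]
  rw [hinner]
  have hθ' := hθ.hasDerivAt
  set θ' := deriv θ t₀
  have hp0 : HasDerivAt (fun t => p t 0) (v 0) t₀ := by
    exact (EuclideanSpace.proj (0 : Fin 2)).hasFDerivAt.comp_hasDerivAt t₀ hp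
  have hp1 : HasDerivAt (fun t => p t 1) (v 1) t₀ := by
    exact (EuclideanSpace.proj (1 : Fin 2)).hasFDerivAt.comp_hasDerivAt t₀ hp
  have hcos : HasDerivAt (fun t => Real.cos (θ t)) (-Real.sin (θ t₀) * θ') t₀ :=
    (Real.hasDerivAt_cos (θ t₀)).comp t₀ hθ'
  have hsin : HasDerivAt (fun t => Real.sin (θ t)) (Real.cos (θ t₀) * θ') t₀ :=
    (Real.hasDerivAt_sin (θ t₀)).comp t₀ hθ'
  have H := hθ'.add
    ((((hp0.sub hcos).mul hsin.neg).add ((hp1.sub hsin).mul hcos)))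
  refine H.congr_deriv (Eq.symm ?_)
  simp only [Pi.neg_apply, Pi.sub_apply]
  have hs := Real.sin_sq_add_cos_sq (θ t₀)
  linear_combination θ' * hs + Real.cos (θ t₀) * θ' * h0 + Real.sin (θ t₀) * θ' * h1
end

section
/- Let α and d be real numbers with 0 < α < π and d ≥ 0, and let θ be any real number. Then in ℝ² the phasor sum for the odd topology, P(θ) = (d/(2 sin α)) • (1, 0) + (d/(2 sin α)) • (cos 2θ, sin 2θ) + (1/sin(α/2)) • (cos θ, sin θ), satisfies P(θ) = (1/sin(α/2) + (d/sin α) · cos θ) • (cos θ, sin θ). Consequently, in polar coordinates with pole at the origin, the locus of points P(θ) is given by the limaçon r(θ) = csc(α/2) + d csc(α) cos(θ). -/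
open Real

/-- **The limaçon of Steiner points, odd topology.**
The phasor sum `P(θ) = (d/(2 sin α)) • (1,0) + (d/(2 sin α)) • (cos 2θ, sin 2θ)
+ (1/sin(α/2)) • (cos θ, sin θ)` equals
`(1/sin(α/2) + (d/sin α)·cos θ) • (cos θ, sin θ)`; hence in polar coordinates the locus of
potential Steiner points is the limaçon `r(θ) = csc(α/2) + d csc(α) cos θ`. -/
theorem limacon_odd_topology
    (α d θ : ℝ) (hα₀ : 0 < α) (hα₁ : α < π) (hd : 0 ≤ d) :
    (d / (2 * Real.sin α)) • pt 1 0 +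
      (d / (2 * Real.sin α)) • pt (Real.cos (2 * θ)) (Real.sin (2 * θ)) +
      (1 / Real.sin (α / 2)) • pt (Real.cos θ) (Real.sin θ) =
    (1 / Real.sin (α / 2) + (d / Real.sin α) * Real.cos θ) •
      pt (Real.cos θ) (Real.sin θ) := by
  ext i
  fin_cases i <;>
    simp [pt, Matrix.cons_val_zero, Matrix.cons_val_one, Real.cos_two_mul,
      Real.sin_two_mul, smul_eq_mul] <;>
    ring
end

section
/- Let α and d be real numbers with 0 < α < π and d ≥ 0, and let θ be any real number. Then in ℝ² the phasor sum for the even topology, P(θ) = (d/(2 sin α)) • (−1, 0) + (d/(2 sin α)) • (cos 2θ, sin 2θ) + (1/cos(α/2)) • (−sin θ, cos θ), satisfies P(θ) = (1/cos(α/2) − (d/sin α) · cos(θ + π/2)) • (cos(θ + π/2), sin(θ + π/2)). Consequently, in polar coordinates with pole at the origin and polar angle φ = θ + π/2, the locus of points P(θ) is given by the limaçon r(φ) = sec(α/2) − d csc(α) cos(φ). -/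
open Real

/-- **The limaçon of Steiner points, even topology.**
The phasor sum `P(θ) = (d/(2 sin α)) • (−1,0) + (d/(2 sin α)) • (cos 2θ, sin 2θ)
+ (1/cos(α/2)) • (−sin θ, cos θ)` equals
`(1/cos(α/2) − (d/sin α)·cos(θ+π/2)) • (cos(θ+π/2), sin(θ+π/2))`; hence in polar
coordinates with polar angle `φ = θ + π/2` the locus of potential Steiner points is the
limaçon `r(φ) = sec(α/2) − d csc(α) cos φ`. -/
theorem limacon_even_topology
    (α d θ : ℝ) (hα₀ : 0 < α) (hα₁ : α < π) (hd : 0 ≤ d) :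
    (d / (2 * Real.sin α)) • pt (-1) 0 +
      (d / (2 * Real.sin α)) • pt (Real.cos (2 * θ)) (Real.sin (2 * θ)) +
      (1 / Real.cos (α / 2)) • pt (-Real.sin θ) (Real.cos θ) =
    (1 / Real.cos (α / 2) - (d / Real.sin α) * Real.cos (θ + π / 2)) •
      pt (Real.cos (θ + π / 2)) (Real.sin (θ + π / 2)) := by
  have hc : Real.cos (α / 2) ≠ 0 := ne_of_gt (Real.cos_pos_of_mem_Ioo ⟨by linarith [Real.pi_pos], by linarith⟩)
  have hs : Real.sin α ≠ 0 := ne_of_gt (Real.sin_pos_of_pos_of_lt_pi hα₀ hα₁)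
  ext i
  have h1 : Real.cos (θ + π / 2) = -Real.sin θ := by
    rw [Real.cos_add]; simp
  have h2 : Real.sin (θ + π / 2) = Real.cos θ := by
    rw [Real.sin_add]; simp
  fin_cases i <;>
    simp [pt, h1, h2, Real.cos_two_mul', Real.sin_two_mul, Real.sin_sq] <;>
    (field_simp; first
      | linear_combination (4 * d * Real.sin α ^ 2 * Real.cos (α/2) ^ 2) * Real.sin_sq_add_cos_sq θ
      | linear_combination (2 * d * Real.cos (α/2)) * Real.sin_sq_add_cos_sq θ
      | ring1)
end

section
/- Let θ : ℝ → ℝ be twice differentiable, let n(t) = (cos θ(t), sin θ(t)) be a point moving on the unit circle centred at the origin of ℝ², and let p : ℝ → ℝ² be twice differentiable with second derivative p″(t₀) = 0 at the point t₀ (a linear perturbation of the endpoint). Set x(t) = p(t) − n(t) and assume that for all t the tangency condition x(t) = ‖x(t)‖ • (−sin θ(t), cos θ(t)) holds with x(t) ≠ 0. Then the length function L(t) = θ(t) + ‖x(t)‖ of the CS-curve is twice differentiable at t₀ and its second variation equals L″(t₀) = ⟪p′(t₀), x̂′(t₀)⟫, where x̂(t) = x(t)/‖x(t)‖ denotes the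 outward pointing unit vector along the straight segment. -/
open Real
open scoped InnerProductSpace

lemma inner_pt (a b c d : ℝ) : ⟪pt a b, pt c d⟫_ℝ = a * c + b * d := by
  simp [pt, PiLp.inner_apply, Fin.sum_univ_two]
  ring

lemma pt_eq (a b : ℝ) : pt a b = a • pt 1 0 + b • pt 0 1 := by
  ext i; fin_cases i <;> simp [pt]

lemma pt_smul (s a b : ℝ) : s • pt a b = pt (s*a) (s*b) := by
  ext i; fin_cases i <;> simp [pt]

lemma hasDerivAt_pt {f g : ℝ → ℝ} {f' g' t : ℝ} (hf : HasDerivAt f f' t)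
    (hg : HasDerivAt g g' t) :
    HasDerivAt (fun t => pt (f t) (g t)) (pt f' g') t := by
  have h := (hf.smul_const (pt 1 0)).add (hg.smul_const (pt 0 1))
  have e : (fun t => pt (f t) (g t)) = (fun y => f y • pt 1 0) + fun y => g y • pt 0 1 :=
    funext fun s => pt_eq _ _
  rw [e, pt_eq f' g']; exact h

/-- **Second variation of length of a CS-curve** (Section 4).
`θ t` is the arc angle, `n t = (cos θ t, sin θ t)` the junction point on the unit circle,
`p t` the moving endpoint with `p″(t₀) = 0` (a linear perturbation), and
`x t = p t - n t` the straight segment, tangent to the circle. Then the length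
`L t = θ t + ‖x t‖` is twice differentiable at `t₀` with
`L″(t₀) = ⟪p′(t₀), x̂′(t₀)⟫`, where `x̂ = x/‖x‖`. -/
theorem second_variation_CS_curve
    (θ : ℝ → ℝ) (p : ℝ → EuclideanSpace ℝ (Fin 2)) (t₀ : ℝ)
    (hθ : Differentiable ℝ θ) (hθ' : Differentiable ℝ (deriv θ))
    (hp : Differentiable ℝ p) (hp' : Differentiable ℝ (deriv p))
    (hp'' : deriv (deriv p) t₀ = 0)
    (htan : ∀ t : ℝ,
      p t - pt (Real.cos (θ t)) (Real.sin (θ t)) =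
        ‖p t - pt (Real.cos (θ t)) (Real.sin (θ t))‖ •
          pt (-Real.sin (θ t)) (Real.cos (θ t)))
    (hne : ∀ t : ℝ, p t - pt (Real.cos (θ t)) (Real.sin (θ t)) ≠ 0) :
    DifferentiableAt ℝ
      (fun t => θ t + ‖p t - pt (Real.cos (θ t)) (Real.sin (θ t))‖) t₀ ∧
    DifferentiableAt ℝ
      (deriv (fun t => θ t + ‖p t - pt (Real.cos (θ t)) (Real.sin (θ t))‖)) t₀ ∧
    deriv (deriv (fun t => θ t + ‖p t - pt (Real.cos (θ t)) (Real.sin (θ t))‖)) t₀ =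
      ⟪deriv p t₀,
        deriv (fun t => ‖p t - pt (Real.cos (θ t)) (Real.sin (θ t))‖⁻¹ •
          (p t - pt (Real.cos (θ t)) (Real.sin (θ t)))) t₀⟫_ℝ := by
  set n : ℝ → EuclideanSpace ℝ (Fin 2) := fun t => pt (Real.cos (θ t)) (Real.sin (θ t)) with hn
  set τ : ℝ → EuclideanSpace ℝ (Fin 2) := fun t => pt (-Real.sin (θ t)) (Real.cos (θ t)) with hτ
  have htan' : ∀ t, p t - n t = ‖p t - n t‖ • τ t := htan
  have hne' : ∀ t, p t - n t ≠ 0 := hne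
  have hτn : ∀ t, ⟪τ t, n t⟫_ℝ = 0 := by
    intro t; simp only [hτ, hn, inner_pt]; ring
  have hττ : ∀ t, ⟪τ t, τ t⟫_ℝ = 1 := by
    intro t; simp only [hτ, inner_pt]
    nlinarith [sin_sq_add_cos_sq (θ t)]
  have hθd : ∀ t, HasDerivAt θ (deriv θ t) t := fun t => (hθ t).hasDerivAt
  have hpd : ∀ t, HasDerivAt p (deriv p t) t := fun t => (hp t).hasDerivAt
  have hnd : ∀ t, HasDerivAt n (deriv θ t • τ t) t := by
    intro t
    have h1 : HasDerivAt (fun s => Real.cos (θ s)) (-Real.sin (θ t) * deriv θ t) t :=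
      (Real.hasDerivAt_cos (θ t)).comp t (hθd t)
    have h2 : HasDerivAt (fun s => Real.sin (θ s)) (Real.cos (θ t) * deriv θ t) t :=
      (Real.hasDerivAt_sin (θ t)).comp t (hθd t)
    have h := hasDerivAt_pt h1 h2
    rw [hn, hτ]
    convert h using 1
    rw [pt_smul]; ring_nf
  have hτd : ∀ t, HasDerivAt τ ((-deriv θ t) • n t) t := by
    intro t
    have h1 : HasDerivAt (fun s => -Real.sin (θ s)) (-(Real.cos (θ t) * deriv θ t)) t :=
      ((Real.hasDerivAt_sin (θ t)).comp t (hθd t)).neg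
    have h2 : HasDerivAt (fun s => Real.cos (θ s)) (-Real.sin (θ t) * deriv θ t) t :=
      (Real.hasDerivAt_cos (θ t)).comp t (hθd t)
    have h := hasDerivAt_pt h1 h2
    rw [hτ, hn]
    convert h using 1
    rw [pt_smul]; ring_nf
  have hxn0 : ∀ t, ⟪p t - n t, n t⟫_ℝ = 0 := by
    intro t
    rw [htan' t, real_inner_smul_left, hτn, mul_zero]
  have hxnorm : ∀ t, ‖p t - n t‖ = ⟪p t - n t, τ t⟫_ℝ := by
    intro t
    conv_rhs => rw [htan' t]
    rw [real_inner_smul_left, hττ, mul_one]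
  have hL : (fun t => θ t + ‖p t - n t‖) = fun t => θ t + ⟪p t - n t, τ t⟫_ℝ :=
    funext fun t => by rw [hxnorm]
  have hL' : ∀ t, HasDerivAt (fun s => θ s + ‖p s - n s‖) (⟪deriv p t, τ t⟫_ℝ) t := by
    intro t
    rw [hL]
    have hx' : HasDerivAt (fun s => p s - n s) (deriv p t - deriv θ t • τ t) t :=
      (hpd t).sub (hnd t)
    have h := (hθd t).add (HasDerivAt.inner (𝕜 := ℝ) hx' (hτd t))
    refine h.congr_deriv ?_
    have e1 : ⟪p t - n t, -deriv θ t • n t⟫_ℝ = 0 := by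
      rw [real_inner_smul_right, hxn0, mul_zero]
    have e2 : ⟪deriv p t - deriv θ t • τ t, τ t⟫_ℝ = ⟪deriv p t, τ t⟫_ℝ - deriv θ t := by
      rw [inner_sub_left, real_inner_smul_left, hττ, mul_one]
    rw [e1, e2]; ring
  have hderivL : deriv (fun s => θ s + ‖p s - n s‖) = fun t => ⟪deriv p t, τ t⟫_ℝ :=
    funext fun t => (hL' t).deriv
  have hL'' : HasDerivAt (fun t => ⟪deriv p t, τ t⟫_ℝ)
      (⟪deriv p t₀, (-deriv θ t₀) • n t₀⟫_ℝ) t₀ := by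
    have h := HasDerivAt.inner (𝕜 := ℝ) ((hp' t₀).hasDerivAt) (hτd t₀)
    rw [hp''] at h
    simpa using h
  have hxhat : (fun t => ‖p t - n t‖⁻¹ • (p t - n t)) = τ := by
    funext t
    nth_rewrite 2 [htan' t]
    rw [smul_smul, inv_mul_cancel₀ (norm_ne_zero_iff.mpr (hne' t)), one_smul]
  refine ⟨(hL' t₀).differentiableAt, ?_, ?_⟩
  · show DifferentiableAt ℝ (deriv (fun s => θ s + ‖p s - n s‖)) t₀
    rw [hderivL]; exact hL''.differentiableAt
  · show deriv (deriv (fun s => θ s + ‖p s - n s‖)) t₀ =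
      ⟪deriv p t₀, deriv (fun s => ‖p s - n s‖⁻¹ • (p s - n s)) t₀⟫_ℝ
    rw [hderivL, hL''.deriv, hxhat, (hτd t₀).deriv]
end
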